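/- Let a < b be real numbers and let g : ℝ → ℝ be continuously differentiable on [a, b] with g(a) = 0. Then ∫_a^b g(t)² dt ≤ (2(b − a)/π)² · ∫_a^b g′(t)² dt. -/

import Mathlib

open MeasureTheory intervalIntegral Real

/-- One-endpoint Wirtinger inequality: if `g` is continuously differentiable on
`[a, b]` and `g a = 0`, then `∫ g² ≤ (2(b-a)/π)² ∫ g′²`. -/
theorem wirtinger_one_endpoint
    (a b : ℝ) (hab : a < b) (g g' : ℝ → ℝ)
    (hderiv : ∀ t ∈ Set.Icc a b, HasDerivAt g (g' t) t)
    (hcont : ContinuousOn g' (Set.Icc a b))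
    (h0 : g a = 0) :
    ∫ t in a..b, (g t) ^ 2 ≤ (2 * (b - a) / π) ^ 2 * ∫ t in a..b, (g' t) ^ 2 := by
  have hL : (0:ℝ) < b - a := sub_pos.mpr hab
  set c : ℝ := π / (2 * (b - a)) with hc_def
  have hc : 0 < c := div_pos Real.pi_pos (by linarith)
  have hcb : c * (b - a) = π / 2 := by
    rw [hc_def]
    field_simp
  -- clamped versions
  set cl : ℝ → ℝ := fun t => max a (min t b) with hcl_def
  have hcl_cont : Continuous cl := continuous_const.max (continuous_id.min continuous_const)
  have hcl_mem : ∀ t, cl t ∈ Set.Icc a b := by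
    intro t
    exact ⟨le_max_left _ _, max_le hab.le (min_le_right _ _)⟩
  have hcl_eq : ∀ t ∈ Set.Icc a b, cl t = t := by
    intro t ht
    simp [hcl_def, min_eq_left ht.2, max_eq_right ht.1]
  have hgc : ContinuousOn g (Set.Icc a b) := fun t ht =>
    (hderiv t ht).continuousAt.continuousWithinAt
  set F : ℝ → ℝ := fun t => (g' (cl t)) ^ 2 with hF_def
  set G : ℝ → ℝ := fun t => (g (cl t)) ^ 2 with hG_def
  have hFcont : Continuous F := (hcont.comp_continuous hcl_cont hcl_mem).pow 2
  have hGcont : Continuous G := (hgc.comp_continuous hcl_cont hcl_mem).pow 2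
  -- the auxiliary function h and Φ
  set h : ℝ → ℝ := fun x => c * (Real.cos (c * (x - a)) / Real.sin (c * (x - a))) with hh_def
  set Φ : ℝ → ℝ := fun x =>
    (∫ t in x..b, F t) - c ^ 2 * (∫ t in x..b, G t) + h x * (g x) ^ 2 with hΦ_def
  -- sin positivity on (a, b]
  have hsin_pos : ∀ x ∈ Set.Ioc a b, 0 < Real.sin (c * (x - a)) := by
    intro x hx
    apply Real.sin_pos_of_pos_of_lt_pi
    · exact mul_pos hc (sub_pos.mpr hx.1)
    · have h2 : c * (x - a) ≤ π / 2 := by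
        rw [← hcb]
        nlinarith [hx.2]
      linarith [Real.pi_pos]
  have hcos_nonneg : ∀ x ∈ Set.Ioc a b, 0 ≤ Real.cos (c * (x - a)) := by
    intro x hx
    apply Real.cos_nonneg_of_mem_Icc
    constructor
    · have : 0 < c * (x - a) := mul_pos hc (sub_pos.mpr hx.1)
      linarith [Real.pi_pos]
    · rw [← hcb]
      nlinarith [hx.2]
  have hhb : h b = 0 := by
    simp [hh_def, hcb, Real.cos_pi_div_two]
  have hΦb : Φ b = 0 := by
    have h1 : (∫ t in b..b, F t) = 0 := intervalIntegral.integral_same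
    have h2 : (∫ t in b..b, G t) = 0 := intervalIntegral.integral_same
    simp only [hΦ_def]
    rw [h1, h2, hhb]
    ring
  -- continuity of the two integral functions
  have contA : Continuous fun u => ∫ t in u..b, F t := by
    have := (intervalIntegral.continuous_primitive (μ := volume)
      (fun x y => hFcont.intervalIntegrable x y) b).neg
    exact this.congr fun u => (intervalIntegral.integral_symm b u).symm
  have contB : Continuous fun u => ∫ t in u..b, G t := by
    have := (intervalIntegral.continuous_primitive (μ := volume)
      (fun x y => hGcont.intervalIntegrable x y) b).neg
    exact this.congr fun u => (intervalIntegral.integral_symm b u).symm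
  -- derivative of Φ at interior points
  have hderivΦ : ∀ y ∈ Set.Ioo a b, HasDerivAt Φ (-(g' y - h y * g y) ^ 2) y := by
    intro y hy
    have hyI : y ∈ Set.Icc a b := ⟨hy.1.le, hy.2.le⟩
    have hs : Real.sin (c * (y - a)) ≠ 0 := (hsin_pos y ⟨hy.1, hy.2.le⟩).ne'
    have dA : HasDerivAt (fun u => ∫ t in u..b, F t) (-F y) y :=
      intervalIntegral.integral_hasDerivAt_left (hFcont.intervalIntegrable y b)
        (hFcont.stronglyMeasurableAtFilter _ _) hFcont.continuousAt
    have dB : HasDerivAt (fun u => ∫ t in u..b, G t) (-G y) y :=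
      intervalIntegral.integral_hasDerivAt_left (hGcont.intervalIntegrable y b)
        (hGcont.stronglyMeasurableAtFilter _ _) hGcont.continuousAt
    have dg : HasDerivAt g (g' y) y := hderiv y hyI
    have dg2 : HasDerivAt (fun t => (g t) ^ 2) (2 * g y ^ 1 * g' y) y := dg.pow 2
    have du : HasDerivAt (fun t => c * (t - a)) c y := by
      simpa using ((hasDerivAt_id y).sub_const a).const_mul c
    have dcos : HasDerivAt (fun t => Real.cos (c * (t - a)))
        (-Real.sin (c * (y - a)) * c) y :=
      by have := (Real.hasDerivAt_cos (c * (y - a))).comp y du; exact this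
    have dsin : HasDerivAt (fun t => Real.sin (c * (t - a)))
        (Real.cos (c * (y - a)) * c) y :=
      by have := (Real.hasDerivAt_sin (c * (y - a))).comp y du; exact this
    have ddiv := dcos.div dsin hs
    have dh : HasDerivAt h (-(c ^ 2 + (h y) ^ 2)) y := by
      have hd := ddiv.const_mul c
      refine hd.congr_deriv ?_
      have hpyth := Real.sin_sq_add_cos_sq (c * (y - a))
      rw [hh_def]
      field_simp
      nlinarith [hpyth]
    have dhg : HasDerivAt (fun t => h t * (g t) ^ 2)
        (-(c ^ 2 + (h y) ^ 2) * (g y) ^ 2 + h y * (2 * g y ^ 1 * g' y)) y := dh.mul dg2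
    have total := (dA.sub (dB.const_mul (c ^ 2))).add dhg
    have hFy : F y = (g' y) ^ 2 := by rw [hF_def]; simp [hcl_eq y hyI]
    have hGy : G y = (g y) ^ 2 := by rw [hG_def]; simp [hcl_eq y hyI]
    refine total.congr_deriv ?_
    rw [hFy, hGy]
    ring
  -- Φ is nonnegative on (a,b)
  have hΦnonneg : ∀ x ∈ Set.Ioo a b, 0 ≤ Φ x := by
    intro x hx
    have hxb : x ≤ b := hx.2.le
    have hsub : Set.Icc x b ⊆ Set.Ioc a b := fun t ht => ⟨lt_of_lt_of_le hx.1 ht.1, ht.2⟩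
    have hcontΦ : ContinuousOn Φ (Set.Icc x b) := by
      apply ContinuousOn.add
      · exact contA.continuousOn.sub (continuousOn_const.mul contB.continuousOn)
      · apply ContinuousOn.mul
        · apply ContinuousOn.mul continuousOn_const
          apply ContinuousOn.div
          · exact (Real.continuous_cos.comp
              (continuous_const.mul (continuous_id.sub continuous_const))).continuousOn
          · exact (Real.continuous_sin.comp
              (continuous_const.mul (continuous_id.sub continuous_const))).continuousOn
          · intro t ht
            exact (hsin_pos t (hsub ht)).ne'
        · exact (hgc.mono fun t ht => ⟨le_of_lt (lt_of_lt_of_le hx.1 ht.1), ht.2⟩).pow 2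
    have hanti : AntitoneOn Φ (Set.Icc x b) := by
      apply antitoneOn_of_deriv_nonpos (convex_Icc x b) hcontΦ
      · intro y hy
        rw [interior_Icc] at hy
        exact (hderivΦ y ⟨lt_trans hx.1 hy.1, hy.2⟩).differentiableAt.differentiableWithinAt
      · intro y hy
        rw [interior_Icc] at hy
        rw [(hderivΦ y ⟨lt_trans hx.1 hy.1, hy.2⟩).deriv]
        exact neg_nonpos.mpr (sq_nonneg _)
    have hle := hanti (Set.left_mem_Icc.mpr hxb) (Set.right_mem_Icc.mpr hxb) hxb
    rw [hΦb] at hle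
    linarith
  -- bound for g near a
  obtain ⟨C, hC⟩ : ∃ C, ∀ t ∈ Set.Icc a b, ‖g' t‖ ≤ C :=
    isCompact_Icc.exists_bound_of_continuousOn hcont
  have hgbound : ∀ x ∈ Set.Icc a b, |g x| ≤ C * (x - a) := by
    intro x hx
    have key := (convex_Icc a b).norm_image_sub_le_of_norm_hasDerivWithin_le
      (fun t ht => (hderiv t ht).hasDerivWithinAt) hC
      (Set.left_mem_Icc.mpr hab.le) hx
    rw [h0] at key
    simpa [Real.norm_eq_abs, abs_of_nonneg (sub_nonneg.mpr hx.1)] using key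
  -- limit of the boundary term
  have htend_bdry : Filter.Tendsto (fun x => h x * (g x) ^ 2) (nhdsWithin a (Set.Ioi a))
      (nhds 0) := by
    have hmem : Set.Ioo a b ∈ nhdsWithin a (Set.Ioi a) :=
      Ioo_mem_nhdsGT_of_mem ⟨le_refl a, hab⟩
    apply squeeze_zero' (g := fun x => (c * (x - a) / Real.sin (c * (x - a))) *
      (C ^ 2 * (x - a)))
    · filter_upwards [hmem] with x hx
      have hxIoc : x ∈ Set.Ioc a b := ⟨hx.1, hx.2.le⟩
      have hhx : 0 ≤ h x :=
        mul_nonneg hc.le (div_nonneg (hcos_nonneg x hxIoc) (hsin_pos x hxIoc).le)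
      positivity
    · filter_upwards [hmem] with x hx
      have hxIoc : x ∈ Set.Ioc a b := ⟨hx.1, hx.2.le⟩
      have hsp := hsin_pos x hxIoc
      have hcn := hcos_nonneg x hxIoc
      have hgb := hgbound x ⟨hx.1.le, hx.2.le⟩
      have hxa : 0 < x - a := sub_pos.mpr hx.1
      have hg2 : (g x) ^ 2 ≤ (C * (x - a)) ^ 2 := by
        nlinarith [sq_abs (g x), abs_nonneg (g x)]
      have hh_le : h x ≤ c / Real.sin (c * (x - a)) := by
        rw [hh_def]
        have h1 : Real.cos (c * (x - a)) / Real.sin (c * (x - a)) ≤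
            1 / Real.sin (c * (x - a)) :=
          (div_le_div_iff_of_pos_right hsp).mpr (Real.cos_le_one _)
        calc c * (Real.cos (c * (x - a)) / Real.sin (c * (x - a)))
            ≤ c * (1 / Real.sin (c * (x - a))) := mul_le_mul_of_nonneg_left h1 hc.le
          _ = c / Real.sin (c * (x - a)) := by rw [mul_one_div]
      calc h x * (g x) ^ 2
          ≤ h x * (C * (x - a)) ^ 2 := by
            apply mul_le_mul_of_nonneg_left hg2
            exact mul_nonneg hc.le (div_nonneg hcn hsp.le)
        _ ≤ (c / Real.sin (c * (x - a))) * (C * (x - a)) ^ 2 :=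
            mul_le_mul_of_nonneg_right hh_le (sq_nonneg _)
        _ = (c * (x - a) / Real.sin (c * (x - a))) * (C ^ 2 * (x - a)) := by
            field_simp
    · -- the majorant tends to 0
      have hslope : Filter.Tendsto (fun v : ℝ => v / Real.sin v)
          (nhdsWithin 0 {x | x ≠ 0}) (nhds 1) := by
        have h1 : Filter.Tendsto (slope Real.sin 0) (nhdsWithin 0 {x | x ≠ 0}) (nhds 1) := by
          have hd := Real.hasDerivAt_sin 0
          rw [hasDerivAt_iff_tendsto_slope] at hd
          exact (by simpa using hd : Filter.Tendsto (slope Real.sin 0) (nhdsWithin 0 {0}ᶜ) (nhds 1))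
        have h2 := h1.inv₀ one_ne_zero
        rw [inv_one] at h2
        apply h2.congr
        intro v
        simp [slope_def_field, div_eq_mul_inv, inv_div]
      have hu : Filter.Tendsto (fun x => c * (x - a)) (nhdsWithin a (Set.Ioi a))
          (nhdsWithin 0 {x | x ≠ 0}) := by
        rw [tendsto_nhdsWithin_iff]
        constructor
        · have hcont' : Continuous fun x => c * (x - a) :=
            continuous_const.mul (continuous_id.sub continuous_const)
          have := hcont'.tendsto a
          simp only [sub_self, mul_zero] at this
          exact this.mono_left nhdsWithin_le_nhds
        · filter_upwards [self_mem_nhdsWithin] with x hx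
          exact (mul_pos hc (sub_pos.mpr hx)).ne'
      have hfirst : Filter.Tendsto (fun x => c * (x - a) / Real.sin (c * (x - a)))
          (nhdsWithin a (Set.Ioi a)) (nhds 1) := hslope.comp hu
      have hsecond : Filter.Tendsto (fun x => C ^ 2 * (x - a))
          (nhdsWithin a (Set.Ioi a)) (nhds 0) := by
        have hcont' : Continuous fun x => C ^ 2 * (x - a) :=
          continuous_const.mul (continuous_id.sub continuous_const)
        have := hcont'.tendsto a
        simp only [sub_self, mul_zero] at this
        exact this.mono_left nhdsWithin_le_nhds
      have := hfirst.mul hsecond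
      simpa using this
  -- pass to the limit
  have tA : Filter.Tendsto (fun x => ∫ t in x..b, F t) (nhdsWithin a (Set.Ioi a))
      (nhds (∫ t in a..b, F t)) := (contA.tendsto a).mono_left nhdsWithin_le_nhds
  have tB : Filter.Tendsto (fun x => ∫ t in x..b, G t) (nhdsWithin a (Set.Ioi a))
      (nhds (∫ t in a..b, G t)) := (contB.tendsto a).mono_left nhdsWithin_le_nhds
  have tΦ : Filter.Tendsto Φ (nhdsWithin a (Set.Ioi a))
      (nhds ((∫ t in a..b, F t) - c ^ 2 * (∫ t in a..b, G t) + 0)) :=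
    (tA.sub (tB.const_mul (c ^ 2))).add htend_bdry
  have hlim : 0 ≤ (∫ t in a..b, F t) - c ^ 2 * (∫ t in a..b, G t) + 0 := by
    apply ge_of_tendsto tΦ
    filter_upwards [Ioo_mem_nhdsGT_of_mem ⟨le_refl a, hab⟩] with x hx
    exact hΦnonneg x hx
  have hFG : (∫ t in a..b, F t) = ∫ t in a..b, (g' t) ^ 2 := by
    apply intervalIntegral.integral_congr
    intro t ht
    rw [Set.uIcc_of_le hab.le] at ht
    simp [hF_def, hcl_eq t ht]
  have hGG : (∫ t in a..b, G t) = ∫ t in a..b, (g t) ^ 2 := by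
    apply intervalIntegral.integral_congr
    intro t ht
    rw [Set.uIcc_of_le hab.le] at ht
    simp [hG_def, hcl_eq t ht]
  rw [hFG, hGG] at hlim
  have hc2 : (0:ℝ) < c ^ 2 := by positivity
  have hfac : (2 * (b - a) / π) ^ 2 = (c ^ 2)⁻¹ := by
    rw [hc_def]
    field_simp
  rw [hfac, inv_mul_eq_div, le_div_iff₀ hc2, mul_comm]
  linarith
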